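/- Let E ⊆ ℝⁿ, x ∈ ℝⁿ, r > 0, and for each unit vector w ∈ S^{n-1} define γ_w(t) = x + tw for t ∈ [r/2, r]. Let F₁ be the set of w ∈ S^{n-1} such that E ∩ |γ_w| ≠ ∅. Then H^{n-1}(F₁) ≤ c(n) · r^{-(n-1)} · min{r, diam(E)}^{n-1} for a dimensional constant c(n). -/

import Mathlib

open MeasureTheory Set Metric
open scoped ENNReal NNReal RealInnerProductSpace

lemma sqrt_aux {a b : ℝ} (ha0 : 0 ≤ a) (ha : a ≤ 1/2) (hb0 : 0 ≤ b) (hb : b ≤ 1/2) :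
    |Real.sqrt (1 - a^2) - Real.sqrt (1 - b^2)| ≤ |a - b| := by
  set x := 1 - a^2 with hx
  set y := 1 - b^2 with hy
  have hx0 : (3:ℝ)/4 ≤ x := by nlinarith
  have hy0 : (3:ℝ)/4 ≤ y := by nlinarith
  have hsx : Real.sqrt x ^ 2 = x := Real.sq_sqrt (by linarith)
  have hsy : Real.sqrt y ^ 2 = y := Real.sq_sqrt (by linarith)
  have h1 : (1:ℝ)/2 ≤ Real.sqrt x := by
    rw [show (1:ℝ)/2 = Real.sqrt (1/4) by rw [show (1:ℝ)/4 = (1/2)^2 by norm_num, Real.sqrt_sq]; norm_num]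
    exact Real.sqrt_le_sqrt (by linarith)
  have h2 : (1:ℝ)/2 ≤ Real.sqrt y := by
    rw [show (1:ℝ)/2 = Real.sqrt (1/4) by rw [show (1:ℝ)/4 = (1/2)^2 by norm_num, Real.sqrt_sq]; norm_num]
    exact Real.sqrt_le_sqrt (by linarith)
  have key : |Real.sqrt x - Real.sqrt y| * (Real.sqrt x + Real.sqrt y) = |x - y| := by
    rw [← abs_of_nonneg (a := Real.sqrt x + Real.sqrt y) (by linarith), ← abs_mul]
    congr 1
    nlinarith
  have h3 : |Real.sqrt x - Real.sqrt y| ≤ |x - y| := by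
    calc |Real.sqrt x - Real.sqrt y| ≤ |Real.sqrt x - Real.sqrt y| * (Real.sqrt x + Real.sqrt y) :=
          le_mul_of_one_le_right (abs_nonneg _) (by linarith)
      _ = |x - y| := key
  have h4 : |x - y| ≤ |a - b| := by
    have : x - y = (b - a) * (b + a) := by ring
    rw [this, abs_mul, abs_of_nonneg (by linarith : (0:ℝ) ≤ b + a), abs_sub_comm]
    calc |a - b| * (b + a) ≤ |a - b| * 1 := by
          apply mul_le_mul_of_nonneg_left (by linarith) (abs_nonneg _)
      _ = |a - b| := mul_one _
  linarith

lemma euclid_ball_bound (m : ℕ) {ρ : ℝ} (hρ : 0 ≤ ρ) :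
    μH[(m:ℝ)] (closedBall (0 : EuclideanSpace ℝ (Fin m)) ρ) ≤
      ((m : ℝ≥0) ^ ((1:ℝ)/2) : ℝ≥0) ^ m * (ENNReal.ofReal (2 * ρ)) ^ m := by
  set K : ℝ≥0 := (m : ℝ≥0) ^ ((1:ℝ)/2) with hK
  set ψ : (Fin m → ℝ) → EuclideanSpace ℝ (Fin m) := ⇑(WithLp.equiv 2 (Fin m → ℝ)).symm with hψ
  have hlip : LipschitzWith K ψ := by
    have h := (PiLp.antilipschitzWith_ofLp 2 (fun _ : Fin m => ℝ)).to_rightInverse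
      (WithLp.equiv 2 (Fin m → ℝ)).apply_symm_apply
    convert h using 2
    · simp [hK]
    · simp
    · rfl
  have hsub : closedBall (0 : EuclideanSpace ℝ (Fin m)) ρ ⊆
      ψ '' (closedBall (0 : Fin m → ℝ) ρ) := by
    intro u hu
    rw [mem_closedBall, dist_zero_right] at hu
    refine ⟨WithLp.equiv 2 (Fin m → ℝ) u, ?_, (WithLp.equiv 2 (Fin m → ℝ)).symm_apply_apply u⟩
    rw [mem_closedBall, dist_zero_right]
    calc ‖WithLp.equiv 2 (Fin m → ℝ) u‖ ≤ ‖u‖ := by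
          simpa using (PiLp.lipschitzWith_ofLp 2 (fun _ : Fin m => ℝ)).dist_le_mul u 0
      _ ≤ ρ := hu
  calc μH[(m:ℝ)] (closedBall (0 : EuclideanSpace ℝ (Fin m)) ρ)
      ≤ μH[(m:ℝ)] (ψ '' (closedBall (0 : Fin m → ℝ) ρ)) := measure_mono hsub
    _ ≤ (K : ℝ≥0∞) ^ (m:ℝ) * μH[(m:ℝ)] (closedBall (0 : Fin m → ℝ) ρ) :=
        hlip.hausdorffMeasure_image_le (Nat.cast_nonneg m) _
    _ = (K : ℝ≥0∞) ^ m * (ENNReal.ofReal (2 * ρ)) ^ m := by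
        have h1 : μH[(m:ℝ)] (closedBall (0 : Fin m → ℝ) ρ)
            = volume (closedBall (0 : Fin m → ℝ) ρ) := by
          have h := hausdorffMeasure_pi_real (ι := Fin m)
          rw [Fintype.card_fin] at h
          rw [h]
        rw [h1, Real.volume_pi_closedBall _ hρ, ENNReal.rpow_natCast,
          ← ENNReal.ofReal_pow (by linarith), Fintype.card_fin]

lemma cap_lemma (m : ℕ) :
    ∃ C : ℝ≥0∞, C ≠ ⊤ ∧ ∀ w₀ ∈ sphere (0 : EuclideanSpace ℝ (Fin (m+1))) 1,
      ∀ ρ : ℝ, 0 ≤ ρ → ρ ≤ 1/2 →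
      μH[(m:ℝ)] (sphere (0 : EuclideanSpace ℝ (Fin (m+1))) 1 ∩ closedBall w₀ ρ) ≤
        C * ENNReal.ofReal ρ ^ m := by
  haveI : Fact (Module.finrank ℝ (EuclideanSpace ℝ (Fin (m+1))) = m + 1) :=
    ⟨finrank_euclideanSpace_fin⟩
  refine ⟨(2:ℝ≥0∞) ^ m * ((((m : ℝ≥0) ^ ((1:ℝ)/2) : ℝ≥0) : ℝ≥0∞) ^ m * (ENNReal.ofReal 2) ^ m),
    ENNReal.mul_ne_top (ENNReal.pow_ne_top (by norm_num))
      (ENNReal.mul_ne_top (ENNReal.pow_ne_top ENNReal.coe_ne_top)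
        (ENNReal.pow_ne_top ENNReal.ofReal_ne_top)), ?_⟩
  intro w₀ hw₀ ρ hρ0 hρ
  have hw₀n : ‖w₀‖ = 1 := mem_sphere_zero_iff_norm.mp hw₀
  have hw₀0 : w₀ ≠ 0 := by intro h; rw [h, norm_zero] at hw₀n; norm_num at hw₀n
  set b := OrthonormalBasis.fromOrthogonalSpanSingleton (𝕜 := ℝ) m hw₀0 with hb
  set g : EuclideanSpace ℝ (Fin m) → EuclideanSpace ℝ (Fin (m+1)) :=
    fun u => ((b.repr.symm u : (Submodule.span ℝ {w₀})ᗮ) : EuclideanSpace ℝ (Fin (m+1)))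
      + Real.sqrt (1 - ‖u‖^2) • w₀ with hg
  have hcov : sphere (0 : EuclideanSpace ℝ (Fin (m+1))) 1 ∩ closedBall w₀ ρ ⊆
      g '' (closedBall 0 ρ) := by
    rintro w ⟨hws, hwb⟩
    have hw1 : ‖w‖ = 1 := mem_sphere_zero_iff_norm.mp hws
    have hd : ‖w - w₀‖ ≤ ρ := by rwa [mem_closedBall, dist_eq_norm] at hwb
    set c : ℝ := ⟪w₀, w⟫ with hc
    have h2c : ‖w - w₀‖^2 = 2 - 2*c := by
      rw [norm_sub_sq_real, hw1, hw₀n, real_inner_comm]; ring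
    have hc78 : 7/8 ≤ c := by nlinarith [hd, hρ, norm_nonneg (w - w₀), h2c]
    have hc0 : 0 ≤ c := by linarith
    set u : EuclideanSpace ℝ (Fin (m+1)) := w - c • w₀ with hu
    have hu_mem : u ∈ (Submodule.span ℝ {w₀})ᗮ := by
      rw [Submodule.mem_orthogonal_singleton_iff_inner_right]
      rw [hu, inner_sub_right, real_inner_smul_right, real_inner_self_eq_norm_sq, hw₀n]
      simp [hc]
    have hcomm : ⟪w, w₀⟫ = c := by rw [hc, real_inner_comm]
    have hnu : ‖u‖^2 = 1 - c^2 := by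
      rw [hu, norm_sub_sq_real, hw1, real_inner_smul_right, norm_smul, Real.norm_eq_abs,
        hw₀n, hcomm, mul_one, sq_abs]
      ring
    have hnuρ : ‖u‖ ≤ ρ := by
      have h1 : ‖u‖^2 ≤ ρ^2 := by
        nlinarith [hnu, h2c, hd, norm_nonneg (w - w₀), sq_nonneg (1 - c)]
      nlinarith [norm_nonneg u]
    set u' : (Submodule.span ℝ {w₀})ᗮ := ⟨u, hu_mem⟩ with hu'
    refine ⟨b.repr u', ?_, ?_⟩
    · rw [mem_closedBall, dist_zero_right, b.repr.norm_map]
      simpa using hnuρ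
    · have hnrep : ‖b.repr u'‖ = ‖u‖ := by rw [b.repr.norm_map]; rfl
      show ((b.repr.symm (b.repr u') : (Submodule.span ℝ {w₀})ᗮ) : EuclideanSpace ℝ (Fin (m+1)))
        + Real.sqrt (1 - ‖b.repr u'‖^2) • w₀ = w
      rw [LinearIsometryEquiv.symm_apply_apply, hnrep, hnu]
      have hsq : Real.sqrt (1 - (1 - c^2)) = c := by
        rw [show 1 - (1 - c^2) = c^2 by ring, Real.sqrt_sq hc0]
      rw [hsq]
      show u + c • w₀ = w
      rw [hu]; abel
  have hlip : LipschitzOnWith 2 g (closedBall 0 ρ) := by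
    apply LipschitzOnWith.of_dist_le_mul
    intro p hp q hq
    have hpρ : ‖p‖ ≤ ρ := by rwa [mem_closedBall, dist_zero_right] at hp
    have hqρ : ‖q‖ ≤ ρ := by rwa [mem_closedBall, dist_zero_right] at hq
    have h1 : g p - g q =
        ((((b.repr.symm p - b.repr.symm q : (Submodule.span ℝ {w₀})ᗮ))
          : EuclideanSpace ℝ (Fin (m+1))))
        + (Real.sqrt (1 - ‖p‖^2) - Real.sqrt (1 - ‖q‖^2)) • w₀ := by
      simp only [hg, sub_smul]
      push_cast
      abel
    have h2 : ‖g p - g q‖ ≤ ‖p - q‖ + |Real.sqrt (1 - ‖p‖^2) - Real.sqrt (1 - ‖q‖^2)| := by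
      rw [h1]
      refine (norm_add_le _ _).trans ?_
      have e1 : ‖(((b.repr.symm p - b.repr.symm q : (Submodule.span ℝ {w₀})ᗮ))
          : EuclideanSpace ℝ (Fin (m+1)))‖ = ‖p - q‖ := by
        rw [show ‖(((b.repr.symm p - b.repr.symm q : (Submodule.span ℝ {w₀})ᗮ))
          : EuclideanSpace ℝ (Fin (m+1)))‖ = ‖(b.repr.symm p - b.repr.symm q :
            (Submodule.span ℝ {w₀})ᗮ)‖ from rfl, ← map_sub, b.repr.symm.norm_map]
      have e2 : ‖(Real.sqrt (1 - ‖p‖^2) - Real.sqrt (1 - ‖q‖^2)) • w₀‖ =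
          |Real.sqrt (1 - ‖p‖^2) - Real.sqrt (1 - ‖q‖^2)| := by
        rw [norm_smul, Real.norm_eq_abs, hw₀n, mul_one]
      rw [e1, e2]
    have h3 : |Real.sqrt (1 - ‖p‖^2) - Real.sqrt (1 - ‖q‖^2)| ≤ |‖p‖ - ‖q‖| :=
      sqrt_aux (norm_nonneg p) (hpρ.trans hρ) (norm_nonneg q) (hqρ.trans hρ)
    have h4 : |‖p‖ - ‖q‖| ≤ ‖p - q‖ := abs_norm_sub_norm_le p q
    rw [dist_eq_norm, dist_eq_norm]
    calc ‖g p - g q‖ ≤ ‖p - q‖ + ‖p - q‖ := by linarith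
      _ = ((2:ℝ≥0):ℝ) * ‖p - q‖ := by push_cast; ring
  calc μH[(m:ℝ)] (sphere (0 : EuclideanSpace ℝ (Fin (m+1))) 1 ∩ closedBall w₀ ρ)
      ≤ μH[(m:ℝ)] (g '' closedBall 0 ρ) := measure_mono hcov
    _ ≤ (2:ℝ≥0∞) ^ (m:ℝ) * μH[(m:ℝ)] (closedBall (0 : EuclideanSpace ℝ (Fin m)) ρ) := by
        simpa using hlip.hausdorffMeasure_image_le (Nat.cast_nonneg m)
    _ ≤ (2:ℝ≥0∞) ^ m * ((((m : ℝ≥0) ^ ((1:ℝ)/2) : ℝ≥0) : ℝ≥0∞) ^ m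
          * (ENNReal.ofReal (2 * ρ)) ^ m) := by
        rw [ENNReal.rpow_natCast]
        exact mul_le_mul_right (euclid_ball_bound m hρ0) _
    _ = (2:ℝ≥0∞) ^ m * ((((m : ℝ≥0) ^ ((1:ℝ)/2) : ℝ≥0) : ℝ≥0∞) ^ m * (ENNReal.ofReal 2) ^ m)
          * ENNReal.ofReal ρ ^ m := by
        rw [ENNReal.ofReal_mul (by norm_num), mul_pow]; ring

lemma sphere_bound (m : ℕ) :
    ∃ C : ℝ≥0∞, C ≠ ⊤ ∧ μH[(m:ℝ)] (sphere (0 : EuclideanSpace ℝ (Fin (m+1))) 1) ≤ C := by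
  obtain ⟨Ccap, hCcap, hcap⟩ := cap_lemma m
  have hcover : sphere (0 : EuclideanSpace ℝ (Fin (m+1))) 1 ⊆
      ⋃ w ∈ sphere (0 : EuclideanSpace ℝ (Fin (m+1))) 1, ball w (1/2) := fun w hw =>
    mem_biUnion hw (mem_ball_self (by norm_num))
  obtain ⟨t, hts, htf, htc⟩ :=
    (isCompact_sphere (0 : EuclideanSpace ℝ (Fin (m+1))) 1).elim_finite_subcover_image
      (fun w _ => isOpen_ball) hcover
  refine ⟨htf.toFinset.card * (Ccap * ENNReal.ofReal (1/2) ^ m),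
    ENNReal.mul_ne_top (ENNReal.natCast_ne_top _)
      (ENNReal.mul_ne_top hCcap (ENNReal.pow_ne_top ENNReal.ofReal_ne_top)), ?_⟩
  have hcov2 : sphere (0 : EuclideanSpace ℝ (Fin (m+1))) 1 ⊆
      ⋃ w ∈ htf.toFinset, sphere (0 : EuclideanSpace ℝ (Fin (m+1))) 1 ∩ closedBall w (1/2) := by
    intro z hz
    obtain ⟨w, hwt, hball⟩ := mem_iUnion₂.mp (htc hz)
    exact mem_biUnion (htf.mem_toFinset.mpr hwt) ⟨hz, ball_subset_closedBall hball⟩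
  calc μH[(m:ℝ)] (sphere (0 : EuclideanSpace ℝ (Fin (m+1))) 1)
      ≤ ∑ w ∈ htf.toFinset,
          μH[(m:ℝ)] (sphere (0 : EuclideanSpace ℝ (Fin (m+1))) 1 ∩ closedBall w (1/2)) :=
        (measure_mono hcov2).trans (measure_biUnion_finset_le _ _)
    _ ≤ htf.toFinset.card • (Ccap * ENNReal.ofReal (1/2) ^ m) := by
        apply Finset.sum_le_card_nsmul
        intro w hw
        exact hcap w (hts (htf.mem_toFinset.mp hw)) (1/2) (by norm_num) le_rfl
    _ = htf.toFinset.card * (Ccap * ENNReal.ofReal (1/2) ^ m) := by rw [nsmul_eq_mul]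

/-- There is a dimensional constant `C = C(n)` such that for every set
`E ⊆ ℝⁿ`, every `x ∈ ℝⁿ` and `r > 0`, the set `F₁` of unit vectors `w` for which the radial
segment `t ↦ x + t w`, `t ∈ [r/2, r]`, meets `E` satisfies
`H^{n-1}(F₁) ≤ C · r^{-(n-1)} · min{r, diam E}^{n-1}`. -/
theorem stmt_12 (n : ℕ) :
    ∃ C : ℝ≥0∞, 0 < C ∧ C ≠ ⊤ ∧
      ∀ (E : Set (EuclideanSpace ℝ (Fin n))) (x : EuclideanSpace ℝ (Fin n)) (r : ℝ),
        0 < r →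
        μH[(n : ℝ) - 1] {w : EuclideanSpace ℝ (Fin n) |
            w ∈ Metric.sphere (0 : EuclideanSpace ℝ (Fin n)) 1 ∧
            (E ∩ (fun t : ℝ => x + t • w) '' Set.Icc (r / 2) r).Nonempty} ≤
          C * (ENNReal.ofReal r)⁻¹ ^ (n - 1) *
            min (ENNReal.ofReal r) (EMetric.diam E) ^ (n - 1) := by
  cases n with
  | zero =>
    refine ⟨1, zero_lt_one, ENNReal.one_ne_top, ?_⟩
    intro E x r hr
    have he : {w : EuclideanSpace ℝ (Fin 0) |
        w ∈ Metric.sphere (0 : EuclideanSpace ℝ (Fin 0)) 1 ∧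
        (E ∩ (fun t : ℝ => x + t • w) '' Set.Icc (r / 2) r).Nonempty} = ∅ := by
      rw [eq_empty_iff_forall_notMem]
      rintro w ⟨hw, -⟩
      have h1 := mem_sphere_zero_iff_norm.mp hw
      rw [Subsingleton.elim w 0, norm_zero] at h1
      norm_num at h1
    rw [he, measure_empty]
    exact zero_le
  | succ m =>
    obtain ⟨Ccap, hCcapT, hcap⟩ := cap_lemma m
    obtain ⟨Csph, hCsphT, hsph⟩ := sphere_bound m
    set C : ℝ≥0∞ := (Ccap * 4 ^ m + 8 ^ m * Csph) + 1 with hC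
    have hCcap4 : Ccap * 4 ^ m ≤ C := le_trans le_self_add le_self_add
    have hC8 : 8 ^ m * Csph ≤ C := le_trans le_add_self le_self_add
    have hCsph : Csph ≤ C := by
      refine le_trans ?_ hC8
      exact le_mul_of_one_le_left zero_le (one_le_pow_of_one_le' (by norm_num) m)
    refine ⟨C, lt_of_lt_of_le zero_lt_one le_add_self, ?_, ?_⟩
    · rw [hC]
      refine ENNReal.add_ne_top.mpr ⟨ENNReal.add_ne_top.mpr ⟨?_, ?_⟩, ENNReal.one_ne_top⟩
      · exact ENNReal.mul_ne_top hCcapT (ENNReal.pow_ne_top (by norm_num))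
      · exact ENNReal.mul_ne_top (ENNReal.pow_ne_top (by norm_num)) hCsphT
    intro E x r hr
    simp only [Nat.cast_add, Nat.cast_one, add_sub_cancel_right, Nat.add_sub_cancel]
    set R := ENNReal.ofReal r with hRdef
    have hR0 : R ≠ 0 := by simpa [hRdef] using hr
    have hRt : R ≠ ⊤ := ENNReal.ofReal_ne_top
    set F : Set (EuclideanSpace ℝ (Fin (m+1))) := {w : EuclideanSpace ℝ (Fin (m+1)) |
        w ∈ Metric.sphere (0 : EuclideanSpace ℝ (Fin (m+1))) 1 ∧
        (E ∩ (fun t : ℝ => x + t • w) '' Set.Icc (r / 2) r).Nonempty} with hFdef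
    have hFs : F ⊆ sphere (0 : EuclideanSpace ℝ (Fin (m+1))) 1 := fun w hw => hw.1
    have get : ∀ w ∈ F, ∃ y ∈ E, ∃ t : ℝ, r/2 ≤ t ∧ t ≤ r ∧ x + t • w = y := by
      rintro w ⟨-, y, hyE, t, ht, hxy⟩
      exact ⟨y, hyE, t, ht.1, ht.2, hxy⟩
    rcases eq_empty_or_nonempty F with hFe | ⟨w₀, hw₀F⟩
    · rw [hFe, measure_empty]; exact zero_le
    have hw₀s : w₀ ∈ sphere (0 : EuclideanSpace ℝ (Fin (m+1))) 1 := hFs hw₀F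
    by_cases hbig : R ≤ EMetric.diam E
    · rw [min_eq_left hbig, mul_assoc, ← mul_pow, ENNReal.inv_mul_cancel hR0 hRt, one_pow,
        mul_one]
      exact le_trans (measure_mono hFs) (le_trans hsph hCsph)
    · push_neg at hbig
      have hdT : EMetric.diam E ≠ ⊤ := (lt_of_lt_of_le hbig le_top).ne
      set d : ℝ := (EMetric.diam E).toReal with hddef
      have hdd : EMetric.diam E = ENNReal.ofReal d := (ENNReal.ofReal_toReal hdT).symm
      have hd0 : 0 ≤ d := ENNReal.toReal_nonneg
      have hdr : d ≤ r := ENNReal.toReal_le_of_le_ofReal hr.le hbig.le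
      rw [min_eq_right hbig.le, hdd]
      -- the distance bound
      have key : ∀ w ∈ F, dist w w₀ ≤ 4 * d / r := by
        intro w hwF
        obtain ⟨y, hyE, t, ht1, ht2, hxy⟩ := get w hwF
        obtain ⟨y₀, hy₀E, t₀, ht₀1, ht₀2, hxy₀⟩ := get w₀ hw₀F
        have hwn : ‖w‖ = 1 := mem_sphere_zero_iff_norm.mp (hFs hwF)
        have hw₀n : ‖w₀‖ = 1 := mem_sphere_zero_iff_norm.mp hw₀s
        have ht0 : 0 ≤ t := by linarith
        have ht₀0 : 0 ≤ t₀ := by linarith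
        have hyd : dist y y₀ ≤ d := by
          have h : edist y y₀ ≤ EMetric.diam E := EMetric.edist_le_diam_of_mem hyE hy₀E
          rw [edist_dist, hdd] at h
          exact (ENNReal.ofReal_le_ofReal_iff hd0).mp h
        have hyx : y - x = t • w := by rw [← hxy]; abel
        have hy₀x : y₀ - x = t₀ • w₀ := by rw [← hxy₀]; abel
        have hnyx : ‖y - x‖ = t := by
          rw [hyx, norm_smul, Real.norm_eq_abs, abs_of_nonneg ht0, hwn, mul_one]
        have hny₀x : ‖y₀ - x‖ = t₀ := by
          rw [hy₀x, norm_smul, Real.norm_eq_abs, abs_of_nonneg ht₀0, hw₀n, mul_one]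
        have htt : |t - t₀| ≤ d := by
          have h1 : |‖y - x‖ - ‖y₀ - x‖| ≤ ‖(y - x) - (y₀ - x)‖ := abs_norm_sub_norm_le _ _
          rw [hnyx, hny₀x, sub_sub_sub_cancel_right] at h1
          refine h1.trans ?_
          rw [← dist_eq_norm]; exact hyd
        have hid : t • w - t • w₀ = (y - y₀) + (t₀ - t) • w₀ := by
          rw [sub_smul, ← hyx, ← hy₀x]; abel
        have hnorm : t * dist w w₀ ≤ 2 * d := by
          have h1 : t * dist w w₀ = ‖t • w - t • w₀‖ := by
            rw [dist_eq_norm, ← smul_sub, norm_smul, Real.norm_eq_abs, abs_of_nonneg ht0]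
          rw [h1, hid]
          calc ‖(y - y₀) + (t₀ - t) • w₀‖ ≤ ‖y - y₀‖ + ‖(t₀ - t) • w₀‖ := norm_add_le _ _
            _ ≤ d + d := by
                refine add_le_add ?_ ?_
                · rw [← dist_eq_norm]; exact hyd
                · rw [norm_smul, Real.norm_eq_abs, hw₀n, mul_one, abs_sub_comm]
                  exact htt
            _ = 2 * d := by ring
        rw [le_div_iff₀ hr]
        nlinarith [dist_nonneg (x := w) (y := w₀), hnorm]
      set ρ : ℝ := 4 * d / r with hρdef
      have hρ0 : 0 ≤ ρ := by positivity
      have hsub : F ⊆ sphere (0 : EuclideanSpace ℝ (Fin (m+1))) 1 ∩ closedBall w₀ ρ :=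
        fun w hw => ⟨hFs hw, key w hw⟩
      have hρR : ENNReal.ofReal ρ = 4 * ENNReal.ofReal d * R⁻¹ := by
        rw [hρdef, div_eq_mul_inv, ENNReal.ofReal_mul (by positivity),
          ENNReal.ofReal_inv_of_pos hr, ENNReal.ofReal_mul (by norm_num)]
        norm_num
        rfl
      by_cases hhalf : ρ ≤ 1/2
      · calc μH[(m:ℝ)] F ≤ μH[(m:ℝ)] (sphere (0 : EuclideanSpace ℝ (Fin (m+1))) 1 ∩
              closedBall w₀ ρ) := measure_mono hsub
          _ ≤ Ccap * ENNReal.ofReal ρ ^ m := hcap w₀ hw₀s ρ hρ0 hhalf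
          _ = (Ccap * 4 ^ m) * R⁻¹ ^ m * ENNReal.ofReal d ^ m := by
              rw [hρR, mul_pow, mul_pow]; ring
          _ ≤ C * R⁻¹ ^ m * ENNReal.ofReal d ^ m := by gcongr
      · push_neg at hhalf
        have hrd : r < 8 * d := by
          rw [hρdef, lt_div_iff₀ hr] at hhalf
          linarith
        have h8 : ((8:ℝ≥0∞) * 8⁻¹) = 1 := ENNReal.mul_inv_cancel (by norm_num) (by norm_num)
        have hRR : R⁻¹ * R = 1 := ENNReal.inv_mul_cancel hR0 hRt
        have hr8 : R * 8⁻¹ ≤ ENNReal.ofReal d := by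
          have : ENNReal.ofReal (r/8) ≤ ENNReal.ofReal d := ENNReal.ofReal_le_ofReal (by linarith)
          rw [ENNReal.ofReal_div_of_pos (by norm_num)] at this
          calc R * 8⁻¹ = R / ENNReal.ofReal 8 := by
                rw [div_eq_mul_inv]; norm_num
            _ ≤ ENNReal.ofReal d := this
        calc μH[(m:ℝ)] F ≤ Csph := le_trans (measure_mono hFs) hsph
          _ = Csph * ((8 * 8⁻¹) ^ m * (R⁻¹ * R) ^ m) := by rw [h8, hRR]; simp
          _ = (8 ^ m * Csph) * R⁻¹ ^ m * (R * 8⁻¹) ^ m := by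
              rw [mul_pow, mul_pow, mul_pow]; ring
          _ ≤ C * R⁻¹ ^ m * ENNReal.ofReal d ^ m := by gcongr
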